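/- The Krull dimension of the Bohl algebra B is infinite: for every n ∈ ℕ there exists a strictly increasing chain 𝔭_0 ⊂ 𝔭_1 ⊂ … ⊂ 𝔭_n of prime ideals of B of length n; equivalently, the Krull dimension of B equals ⊤ (infinity). -/

import Mathlib

open Complex

noncomputable section

/-- The Bohl algebra: the subalgebra of functions `ℝ → ℂ` (pointwise operations)
spanned over `ℂ` by the functions `t ↦ t^k * exp (λ * t)`, `k ∈ ℕ`, `λ ∈ ℂ`. -/
def Bohl : Subalgebra ℂ (ℝ → ℂ) :=
  Algebra.adjoin ℂ
    {g : ℝ → ℂ | ∃ (k : ℕ) (l : ℂ), g = fun t : ℝ => (t : ℂ) ^ k * Complex.exp (l * t)}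

namespace BohlProof

open Polynomial

/-- A measure of a polynomial: 0 if zero, else natDegree + 1. -/
def pm (p : ℂ[X]) : ℕ := if p = 0 then 0 else p.natDegree + 1

lemma pm_eq_zero {p : ℂ[X]} (h : pm p = 0) : p = 0 := by
  by_contra h0; simp [pm, h0] at h

lemma pm_zero : pm 0 = 0 := by simp [pm]

lemma pm_le (p : ℂ[X]) : pm p ≤ p.natDegree + 1 := by
  unfold pm; split <;> omega

lemma pm_of_ne {p : ℂ[X]} (h : p ≠ 0) : pm p = p.natDegree + 1 := if_neg h

lemma natDegree_comp_add_one (p : ℂ[X]) : (p.comp (X + C 1)).natDegree = p.natDegree := by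
  rw [natDegree_comp, natDegree_X_add_C, mul_one]

lemma leadingCoeff_comp_add_one (p : ℂ[X]) :
    (p.comp (X + C 1)).leadingCoeff = p.leadingCoeff := by
  rw [leadingCoeff_comp (by rw [natDegree_X_add_C]; omega), (monic_X_add_C (1:ℂ)).leadingCoeff,
    one_pow, mul_one]

lemma coeff_comp_add_one (p : ℂ[X]) :
    (p.comp (X + C 1)).coeff p.natDegree = p.leadingCoeff := by
  conv_lhs => rw [← natDegree_comp_add_one p]
  rw [coeff_natDegree, leadingCoeff_comp_add_one]

lemma pm_q_le (a b : ℂ) (p : ℂ[X]) : pm (C a * p.comp (X + C 1) - C b * p) ≤ pm p := by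
  by_cases hp : p = 0
  · simp [hp, pm]
  by_cases hq : C a * p.comp (X + C 1) - C b * p = 0
  · rw [hq, pm_zero]; omega
  rw [pm_of_ne hq, pm_of_ne hp]
  have h1 : (C a * p.comp (X + C 1)).natDegree ≤ p.natDegree :=
    (natDegree_C_mul_le _ _).trans (by rw [natDegree_comp_add_one])
  have h2 : (C b * p).natDegree ≤ p.natDegree := natDegree_C_mul_le _ _
  have h3 := natDegree_sub_le (C a * p.comp (X + C 1)) (C b * p)
  omega

lemma pm_diff_lt (a : ℂ) {p : ℂ[X]} (hp : p ≠ 0) :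
    pm (C a * p.comp (X + C 1) - C a * p) < pm p := by
  rw [pm_of_ne hp, ← mul_sub]
  by_cases h0 : p.comp (X + C 1) - p = 0
  · rw [h0, mul_zero, pm_zero]; omega
  by_cases hd : p.natDegree = 0
  · exfalso
    obtain ⟨c, rfl⟩ := natDegree_eq_zero.mp hd
    simp at h0
  · have hcompne : p.comp (X + C 1) ≠ 0 := by
      rw [← leadingCoeff_ne_zero, leadingCoeff_comp_add_one, leadingCoeff_ne_zero]
      exact hp
    have hdeg : (p.comp (X + C 1) - p).natDegree < p.natDegree := by
      rw [natDegree_lt_iff_degree_lt h0]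
      have := degree_sub_lt (by
          rw [degree_eq_natDegree hcompne, degree_eq_natDegree hp, natDegree_comp_add_one])
        hcompne (leadingCoeff_comp_add_one p)
      rwa [degree_eq_natDegree hcompne, natDegree_comp_add_one] at this
    have h4 := pm_le (C a * (p.comp (X + C 1) - p))
    have h5 := natDegree_C_mul_le a (p.comp (X + C 1) - p)
    omega

lemma seq_zero {ι : Type*} (L : Finset ι) (z : ι → ℂ) (hz : Set.InjOn z L)
    (hz0 : ∀ i ∈ L, z i ≠ 0) :
    ∀ (N : ℕ) (p : ι → ℂ[X]), (∑ i ∈ L, pm (p i)) ≤ N →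
      (∀ n : ℕ, ∑ i ∈ L, (p i).eval (n : ℂ) * z i ^ n = 0) → ∀ i ∈ L, p i = 0 := by
  intro N
  induction N with
  | zero =>
    intro p hm _ i hi
    exact pm_eq_zero (Nat.eq_zero_of_le_zero
      ((Finset.single_le_sum (fun j _ => Nat.zero_le _) hi).trans hm))
  | succ N ih =>
    intro p hm hrel
    by_contra hc
    push_neg at hc
    obtain ⟨i₀, hi₀, hp₀⟩ := hc
    have single_case : (∀ j ∈ L, j ≠ i₀ → p j = 0) → p i₀ = 0 := by
      intro hall
      have hev : ∀ n : ℕ, (p i₀).eval (n : ℂ) = 0 := by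
        intro n
        have h := hrel n
        rw [Finset.sum_eq_single_of_mem i₀ hi₀
          (fun j hj hne => by rw [hall j hj hne]; simp)] at h
        exact (mul_eq_zero.mp h).resolve_right (pow_ne_zero _ (hz0 i₀ hi₀))
      apply eq_zero_of_infinite_isRoot
      apply Set.infinite_of_injective_forall_mem (f := fun n : ℕ => (n : ℂ)) Nat.cast_injective
      intro n
      exact hev n
    by_cases hone : ∀ j ∈ L, j ≠ i₀ → p j = 0
    · exact hp₀ (single_case hone)
    push_neg at hone
    obtain ⟨i₁, hi₁, hne₁, hp₁⟩ := hone
    set q : ι → ℂ[X] := fun j => C (z j) * (p j).comp (X + C 1) - C (z i₀) * p j with hq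
    have hrel' : ∀ n : ℕ, ∑ j ∈ L, (q j).eval (n : ℂ) * z j ^ n = 0 := by
      intro n
      have h1 : ∑ j ∈ L, (p j).eval ((n : ℂ) + 1) * z j ^ (n + 1) = 0 := by
        have h := hrel (n + 1); push_cast at h; exact h
      have h0 := hrel n
      calc ∑ j ∈ L, (q j).eval (n : ℂ) * z j ^ n
          = ∑ j ∈ L, ((p j).eval ((n : ℂ) + 1) * z j ^ (n + 1)
              - z i₀ * ((p j).eval (n : ℂ) * z j ^ n)) := by
            apply Finset.sum_congr rfl
            intro j hj
            simp only [hq, eval_sub, eval_mul, eval_C, eval_comp, eval_add, eval_X, eval_one,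
              pow_succ]
            ring
        _ = 0 := by
            rw [Finset.sum_sub_distrib, h1, ← Finset.mul_sum, h0, mul_zero, sub_zero]
    have hmle : ∀ j ∈ L, pm (q j) ≤ pm (p j) := fun j _ => pm_q_le _ _ _
    have hmlt : pm (q i₀) < pm (p i₀) := pm_diff_lt _ hp₀
    have hsum : ∑ j ∈ L, pm (q j) ≤ N := by
      have := Finset.sum_lt_sum hmle ⟨i₀, hi₀, hmlt⟩
      omega
    have hqz := ih q hsum hrel'
    have hcoeff : (q i₁).coeff (p i₁).natDegree = (z i₁ - z i₀) * (p i₁).leadingCoeff := by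
      simp only [hq, coeff_sub, coeff_C_mul, coeff_comp_add_one, coeff_natDegree]
      ring
    have hqne : q i₁ ≠ 0 := by
      intro h
      rw [h, coeff_zero] at hcoeff
      rcases mul_eq_zero.mp hcoeff.symm with h' | h'
      · exact hne₁ (hz hi₁ hi₀ (sub_eq_zero.mp h'))
      · exact hp₁ (leadingCoeff_eq_zero.mp h')
    exact hqne (hqz i₁ hi₁)


/-- There is a real `s ≠ 0` such that `l ↦ exp (l * s)` is injective on a finite set. -/
lemma exists_good_s (L : Finset ℂ) :
    ∃ s : ℝ, s ≠ 0 ∧ Set.InjOn (fun l : ℂ => Complex.exp (l * s)) L := by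
  classical
  -- bad set
  have hcount : ∀ l ∈ L, ∀ l' ∈ L, l ≠ l' →
      {s : ℝ | Complex.exp (l * s) = Complex.exp (l' * s)}.Countable := by
    intro l _ l' _ hne
    have hsub : {s : ℝ | Complex.exp (l * s) = Complex.exp (l' * s)} ⊆
        ⋃ m : ℤ, {s : ℝ | (s : ℂ) = m * (2 * Real.pi * I) / (l - l')} := by
      intro s hs
      simp only [Set.mem_setOf_eq] at hs
      rw [Complex.exp_eq_exp_iff_exists_int] at hs
      obtain ⟨m, hm⟩ := hs
      refine Set.mem_iUnion.mpr ⟨m, ?_⟩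
      have h : (l - l') * s = m * (2 * Real.pi * I) := by ring_nf; ring_nf at hm; linear_combination hm
      simp only [Set.mem_setOf_eq]
      field_simp [sub_ne_zero.mpr hne] at h ⊢
      linear_combination h
    refine Set.Countable.mono hsub ?_
    refine Set.countable_iUnion fun m => ?_
    apply Set.Subsingleton.countable
    intro a ha b hb
    simp only [Set.mem_setOf_eq] at ha hb
    exact_mod_cast ha.trans hb.symm
  set Bad : Set ℝ := {0} ∪ ⋃ l ∈ (L : Set ℂ), ⋃ l' ∈ (L : Set ℂ),
      {s : ℝ | l ≠ l' ∧ Complex.exp (l * s) = Complex.exp (l' * s)} with hBad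
  have hBadCount : Bad.Countable := by
    apply Set.Countable.union (Set.countable_singleton 0)
    apply Set.Countable.biUnion (L.finite_toSet.countable)
    intro l hl
    apply Set.Countable.biUnion (L.finite_toSet.countable)
    intro l' hl'
    by_cases hne : l = l'
    · subst hne
      exact Set.Countable.mono (fun s hs => absurd rfl hs.1) Set.countable_empty
    · exact Set.Countable.mono (fun s hs => hs.2) (hcount l hl l' hl' hne)
  have : Bad ≠ Set.univ := by
    intro h
    exact Cardinal.not_countable_real (h ▸ hBadCount)
  obtain ⟨s, hs⟩ := Set.ne_univ_iff_exists_notMem _ |>.mp this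
  refine ⟨s, ?_, ?_⟩
  · intro h
    exact hs (Or.inl (by simp [h]))
  · intro l hl l' hl' hee
    by_contra hne
    exact hs (Or.inr (Set.mem_biUnion hl (Set.mem_biUnion hl' ⟨hne, hee⟩)))

lemma exp_poly_indep (L : Finset ℂ) (p : ℂ → ℂ[X])
    (h : ∀ t : ℝ, ∑ l ∈ L, (p l).eval (t : ℂ) * Complex.exp (l * t) = 0) :
    ∀ l ∈ L, p l = 0 := by
  obtain ⟨s, hs0, hsinj⟩ := exists_good_s L
  set z : ℂ → ℂ := fun l => Complex.exp (l * s) with hz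
  set q : ℂ → ℂ[X] := fun l => (p l).comp (C (s : ℂ) * X) with hqdef
  have hrel : ∀ n : ℕ, ∑ l ∈ L, (q l).eval (n : ℂ) * z l ^ n = 0 := by
    intro n
    have ht := h (s * n)
    calc ∑ l ∈ L, (q l).eval (n : ℂ) * z l ^ n
        = ∑ l ∈ L, (p l).eval (((s * n : ℝ) : ℂ)) * Complex.exp (l * ((s * n : ℝ) : ℂ)) := by
          apply Finset.sum_congr rfl
          intro l _
          rw [hqdef]
          simp only [eval_comp, eval_mul, eval_C, eval_X]
          congr 1
          · push_cast; ring_nf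
          · rw [hz, ← Complex.exp_nat_mul]
            congr 1
            push_cast; ring
      _ = 0 := ht
  have hq := seq_zero L z hsinj (fun l _ => Complex.exp_ne_zero _)
    (∑ l ∈ L, pm (q l)) q le_rfl hrel
  intro l hl
  have hql : q l = 0 := hq l hl
  apply Polynomial.zero_of_eval_zero
  intro w
  have := congrArg (Polynomial.eval (w / s : ℂ)) hql
  rw [hqdef] at this
  simp only [eval_comp, eval_mul, eval_C, eval_X, eval_zero] at this
  rwa [mul_div_cancel₀] at this
  exact_mod_cast hs0


/-- The Bohl monomials, indexed by `ℕ × ℂ`. -/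
def bohlFun (a : ℕ × ℂ) : ℝ → ℂ := fun t : ℝ => (t : ℂ) ^ a.1 * Complex.exp (a.2 * t)



lemma bohl_li : LinearIndependent ℂ bohlFun := by
  classical
  rw [linearIndependent_iff]
  intro c hc
  set L : Finset ℂ := c.support.image Prod.snd with hL
  set p : ℂ → ℂ[X] := fun l => ∑ a ∈ c.support.filter (fun a => a.2 = l), C (c a) * X ^ a.1
    with hp
  have hrel : ∀ t : ℝ, ∑ l ∈ L, (p l).eval (t : ℂ) * Complex.exp (l * t) = 0 := by
    intro t
    have h0 : (Finsupp.linearCombination ℂ bohlFun c) t = 0 := by rw [hc]; rfl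
    rw [Finsupp.linearCombination_apply, Finsupp.sum, Finset.sum_apply] at h0
    calc ∑ l ∈ L, (p l).eval (t : ℂ) * Complex.exp (l * t)
        = ∑ l ∈ L, ∑ a ∈ c.support.filter (fun a => a.2 = l),
            c a * ((t : ℂ) ^ a.1 * Complex.exp (a.2 * t)) := by
          apply Finset.sum_congr rfl
          intro l _
          rw [hp]
          simp only [eval_finset_sum, eval_mul, eval_C, eval_pow, eval_X, Finset.sum_mul]
          apply Finset.sum_congr rfl
          intro a ha
          rw [(Finset.mem_filter.mp ha).2]
          ring
      _ = ∑ a ∈ c.support, c a * ((t : ℂ) ^ a.1 * Complex.exp (a.2 * t)) :=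
          Finset.sum_fiberwise_of_maps_to (fun a ha => Finset.mem_image_of_mem Prod.snd ha) _
      _ = 0 := by
          rw [← h0]
          apply Finset.sum_congr rfl
          intro a _
          simp [bohlFun, Pi.smul_apply, smul_eq_mul]
  have hpz := exp_poly_indep L p hrel
  ext a
  rw [Finsupp.coe_zero, Pi.zero_apply]
  by_contra ha
  have haS : a ∈ c.support := Finsupp.mem_support_iff.mpr ha
  have hl : a.2 ∈ L := Finset.mem_image_of_mem _ haS
  have hpa := hpz a.2 hl
  have hcoeff := congrArg (fun q => Polynomial.coeff q a.1) hpa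
  simp only [coeff_zero, hp] at hcoeff
  rw [finset_sum_coeff] at hcoeff
  have hsingle := Finset.sum_eq_single_of_mem
    (s := c.support.filter (fun b => b.2 = a.2))
    (f := fun b => (C (c b) * X ^ b.1).coeff a.1) a
    (Finset.mem_filter.mpr ⟨haS, rfl⟩)
    (by
      intro b hb hba
      obtain ⟨hbS, hb2⟩ := Finset.mem_filter.mp hb
      show (C (c b) * X ^ b.1).coeff a.1 = (0 : ℂ)
      rw [coeff_C_mul, coeff_X_pow, if_neg, mul_zero]
      intro h1
      exact hba (Prod.ext (h1.symm) hb2))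
  rw [hsingle] at hcoeff
  simp [coeff_C_mul, coeff_X_pow] at hcoeff
  exact ha hcoeff




abbrev BA := AddMonoidAlgebra ℂ (ℕ × ℂ)

/-- The Bohl monomials as a multiplicative monoid hom. -/
def expMul : Multiplicative (ℕ × ℂ) →* (ℝ → ℂ) where
  toFun a := bohlFun a.toAdd
  map_one' := by funext t; simp [bohlFun]
  map_mul' a b := by
    funext t
    simp only [toAdd_mul, bohlFun, Prod.fst_add, Prod.snd_add, Pi.mul_apply]
    rw [pow_add, add_mul, Complex.exp_add]
    ring

def bohlHom : BA →ₐ[ℂ] (ℝ → ℂ) := AddMonoidAlgebra.lift ℂ (ℝ → ℂ) (ℕ × ℂ) expMul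

lemma bohlHom_apply (f : BA) : bohlHom f = Finsupp.linearCombination ℂ bohlFun f.coeff := by
  rw [bohlHom, AddMonoidAlgebra.lift_apply, Finsupp.linearCombination_apply]
  rfl

lemma bohlHom_injective : Function.Injective bohlHom := by
  rw [injective_iff_map_eq_zero]
  intro f hf
  exact AddMonoidAlgebra.coeff_eq_zero.mp
    (linearIndependent_iff.mp bohl_li f.coeff (by rw [← bohlHom_apply]; exact hf))

lemma bohlHom_range : bohlHom.range = Bohl := by
  apply le_antisymm
  · rintro x ⟨f, rfl⟩
    show bohlHom f ∈ Bohl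
    rw [bohlHom_apply, Finsupp.linearCombination_apply, Finsupp.sum]
    apply sum_mem
    intro a _
    have hS : bohlFun a ∈ {g : ℝ → ℂ |
        ∃ (k : ℕ) (l : ℂ), g = fun t : ℝ => (t : ℂ) ^ k * Complex.exp (l * t)} :=
      ⟨a.1, a.2, rfl⟩
    exact Subalgebra.smul_mem _ (Algebra.subset_adjoin hS) _
  · rw [Bohl]
    apply Algebra.adjoin_le
    rintro g ⟨k, l, rfl⟩
    refine ⟨AddMonoidAlgebra.single (k, l) 1, ?_⟩
    show bohlHom (AddMonoidAlgebra.single (k, l) 1) = _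
    rw [bohlHom, AddMonoidAlgebra.lift_single, one_smul]
    rfl

def bohlEquiv : BA ≃ₐ[ℂ] Bohl :=
  (AlgEquiv.ofInjective bohlHom bohlHom_injective).trans
    (Subalgebra.equivOfEq _ _ bohlHom_range)

/-- A transcendental real number. -/
def xr : ℝ := liouvilleNumber 3

lemma xr_trans : Transcendental ℚ ((xr : ℝ) : ℂ) := by
  have h0 : Transcendental ℤ xr := transcendental_liouvilleNumber (by norm_num)
  have h1 : Transcendental ℚ xr := fun h => h0 ((IsFractionRing.isAlgebraic_iff ℤ ℚ ℝ).mpr h)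
  have h2 := (transcendental_algebraMap_iff (R := ℚ) (S := ℝ) (A := ℂ)
    (algebraMap ℝ ℂ).injective (a := xr)).mpr h1
  rwa [Complex.coe_algebraMap] at h2

lemma pow_li (n : ℕ) : LinearIndependent ℚ (fun i : Fin n => ((xr : ℂ)) ^ (i : ℕ)) := by
  have hli : LinearIndependent ℚ (fun i : ℕ => ((xr : ℂ)) ^ i) := by
    rw [linearIndependent_iff']
    intro s g hsum i hi
    have hx := transcendental_iff.mp xr_trans
    have hp : (∑ j ∈ s, Polynomial.C (g j) * Polynomial.X ^ j) = 0 := by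
      apply hx
      rw [map_sum]
      simp only [map_mul, map_pow, aeval_C, aeval_X]
      simpa [Algebra.smul_def] using hsum
    have hco := congrArg (fun q => Polynomial.coeff q i) hp
    simp only [finset_sum_coeff, coeff_zero] at hco
    have hsingle := Finset.sum_eq_single_of_mem
      (s := s) (f := fun j => (C (g j) * X ^ j).coeff i) i hi
      (by
        intro b hb hbi
        show (C (g b) * X ^ b).coeff i = (0 : ℚ)
        rw [coeff_C_mul, coeff_X_pow, if_neg (fun h => hbi h.symm), mul_zero])
    rw [hsingle] at hco
    simpa [coeff_C_mul, coeff_X_pow] using hco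
  exact hli.comp (fun i : Fin n => (i : ℕ)) Fin.val_injective

lemma exists_coords (n : ℕ) : ∃ c : Fin n → (ℂ →ₗ[ℚ] ℚ),
    ∀ i j : Fin n, c i ((xr : ℂ) ^ (j : ℕ)) = if j = i then 1 else 0 := by
  have li := pow_li n
  set v : Fin n → ℂ := fun i => (xr : ℂ) ^ (i : ℕ) with hv
  set W := Submodule.span ℚ (Set.range v) with hW
  obtain ⟨W', hW'⟩ := Submodule.exists_isCompl W
  set proj := W.projectionOnto W' hW' with hproj
  set b : Module.Basis (Fin n) ℚ W := Module.Basis.span li with hb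
  refine ⟨fun i => (b.coord i) ∘ₗ proj, ?_⟩
  intro i j
  have hmem : v j ∈ W := Submodule.subset_span (Set.mem_range_self j)
  have h1 : proj (v j) = ⟨v j, hmem⟩ :=
    Submodule.projectionOnto_apply_left hW' ⟨v j, hmem⟩
  have hbj : (⟨v j, hmem⟩ : W) = b j := by
    apply Subtype.ext
    rw [hb, Module.Basis.span_apply]
  show b.coord i (proj (v j)) = _
  rw [h1, hbj, Module.Basis.coord_apply, Module.Basis.repr_self, Finsupp.single_apply]

/-- Zero out the coordinates below `j`. -/
def cutoff (n j : ℕ) : (Fin n → ℚ) →+ (Fin n → ℚ) where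
  toFun w i := if j ≤ (i : ℕ) then w i else 0
  map_zero' := by funext i; simp
  map_add' w₁ w₂ := by funext i; by_cases h : j ≤ (i : ℕ) <;> simp [h]

def Fc {n : ℕ} (c : Fin n → (ℂ →ₗ[ℚ] ℚ)) : ℂ →+ (Fin n → ℚ) where
  toFun z i := c i z
  map_zero' := by funext i; simp
  map_add' z₁ z₂ := by funext i; simp

def hj {n : ℕ} (c : Fin n → (ℂ →ₗ[ℚ] ℚ)) (j : ℕ) : (ℕ × ℂ) →+ (ℕ × (Fin n → ℚ)) :=
  (AddMonoidHom.id ℕ).prodMap ((cutoff n j).comp (Fc c))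

def Phi {n : ℕ} (c : Fin n → (ℂ →ₗ[ℚ] ℚ)) (j : ℕ) :
    BA →ₐ[ℂ] AddMonoidAlgebra ℂ (ℕ × (Fin n → ℚ)) :=
  AddMonoidAlgebra.mapDomainAlgHom ℂ ℂ (hj c j)

example (n : ℕ) : IsDomain (AddMonoidAlgebra ℂ (ℕ × (Fin n → ℚ))) :=
  NoZeroDivisors.to_isDomain _

lemma cutoff_comp (n j : ℕ) (w : Fin n → ℚ) :
    cutoff n (j+1) (cutoff n j w) = cutoff n (j+1) w := by
  funext i
  simp only [cutoff, AddMonoidHom.coe_mk, ZeroHom.coe_mk]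
  by_cases h : j + 1 ≤ (i : ℕ)
  · rw [if_pos h, if_pos h, if_pos (by omega)]
  · rw [if_neg h, if_neg h]

lemma Phi_factor {n : ℕ} (c : Fin n → (ℂ →ₗ[ℚ] ℚ)) (j : ℕ) :
    Phi c (j+1) = (AddMonoidAlgebra.mapDomainAlgHom ℂ ℂ
      ((AddMonoidHom.id ℕ).prodMap (cutoff n (j+1)))).comp (Phi c j) := by
  rw [Phi, Phi, ← AddMonoidAlgebra.mapDomainAlgHom_comp]
  congr 1
  apply AddMonoidHom.ext
  intro a
  apply Prod.ext
  · rfl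
  · exact (cutoff_comp n j _).symm


lemma Phi_single {n : ℕ} (c : Fin n → (ℂ →ₗ[ℚ] ℚ)) (j : ℕ) (a : ℕ × ℂ) (r : ℂ) :
    Phi c j (AddMonoidAlgebra.single a r) = AddMonoidAlgebra.single (a.1, cutoff n j (Fc c a.2)) r := by
  rw [Phi, AddMonoidAlgebra.mapDomainAlgHom_apply, AddMonoidAlgebra.mapDomain_single]
  rfl

lemma exists_ltSeries (n : ℕ) :
    ∃ s : LTSeries (PrimeSpectrum Bohl), s.length = n := by
  obtain ⟨c, hc⟩ := exists_coords n
  haveI : IsDomain (AddMonoidAlgebra ℂ (ℕ × (Fin n → ℚ))) := NoZeroDivisors.to_isDomain _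
  set χ : ℕ → (Bohl →+* AddMonoidAlgebra ℂ (ℕ × (Fin n → ℚ))) :=
    fun j => (Phi c j).toRingHom.comp (bohlEquiv.symm : Bohl →ₐ[ℂ] BA).toRingHom with hχ
  set P : ℕ → Ideal Bohl := fun j => RingHom.ker (χ j) with hP
  have hprime : ∀ j, (P j).IsPrime := fun j => RingHom.ker_isPrime _
  have hmono : ∀ j, P j ≤ P (j+1) := by
    intro j x hx
    have hx' : Phi c j (bohlEquiv.symm x) = 0 := hx
    show Phi c (j+1) (bohlEquiv.symm x) = 0
    rw [Phi_factor c j, AlgHom.comp_apply, hx', map_zero]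
  have hne : ∀ j : ℕ, j < n → P j ≠ P (j+1) := by
    intro j hjn heq
    set jf : Fin n := ⟨j, hjn⟩ with hjf
    set w : Fin n → ℚ := Fc c ((xr : ℂ) ^ j) with hw
    have hwj : w jf = 1 := by
      show c jf ((xr : ℂ) ^ j) = 1
      have h2 := hc jf jf
      rw [if_pos rfl] at h2
      exact h2
    have hwi : ∀ i : Fin n, j + 1 ≤ (i : ℕ) → w i = 0 := by
      intro i hi
      show c i ((xr : ℂ) ^ j) = 0
      have h2 := hc i jf
      rwa [if_neg (by
        intro h
        rw [← h] at hi
        simp [hjf] at hi)] at h2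
    set u : BA := AddMonoidAlgebra.single ((0 : ℕ), (xr : ℂ) ^ j) 1
      - AddMonoidAlgebra.single ((0 : ℕ), (0 : ℂ)) 1 with hu
    have hcut1 : cutoff n (j+1) w = 0 := by
      funext i
      show (if j + 1 ≤ (i : ℕ) then w i else 0) = 0
      split
      · exact hwi i (by assumption)
      · rfl
    have hFc0 : Fc c (0 : ℂ) = 0 := map_zero _
    have hker : Phi c (j+1) u = 0 := by
      rw [hu, map_sub, Phi_single, Phi_single, hFc0, map_zero, hcut1]
      exact sub_self _
    have hcutw : cutoff n j w jf = 1 := by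
      show (if j ≤ (jf : ℕ) then w jf else 0) = 1
      rw [if_pos (by simp [hjf]), hwj]
    have hnotker : Phi c j u ≠ 0 := by
      intro h
      rw [hu, map_sub, Phi_single, Phi_single, hFc0, map_zero] at h
      have hab : ((0 : ℕ), cutoff n j w) ≠ ((0 : ℕ), (0 : Fin n → ℚ)) := by
        intro hh
        have := congrArg (fun y => y.2 jf) hh
        simp only at this
        rw [hcutw] at this
        exact one_ne_zero this
      have hone := congrArg (fun y : AddMonoidAlgebra ℂ (ℕ × (Fin n → ℚ)) => y.coeff ((0 : ℕ), cutoff n j w)) h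
      simp only at hone
      rw [AddMonoidAlgebra.coeff_sub, Finsupp.sub_apply, AddMonoidAlgebra.coeff_single,
        AddMonoidAlgebra.coeff_single, Finsupp.single_eq_same,
        Finsupp.single_eq_of_ne hab, AddMonoidAlgebra.coeff_zero, Finsupp.zero_apply, sub_zero] at hone
      exact one_ne_zero hone
    have hin : bohlEquiv u ∈ P (j+1) := by
      show Phi c (j+1) (bohlEquiv.symm (bohlEquiv u)) = 0
      rw [AlgEquiv.symm_apply_apply]
      exact hker
    rw [← heq] at hin
    exact hnotker (by
      have : Phi c j (bohlEquiv.symm (bohlEquiv u)) = 0 := hin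
      rwa [AlgEquiv.symm_apply_apply] at this)
  refine ⟨LTSeries.mk n (fun i => ⟨P (i : ℕ), hprime _⟩) ?_, rfl⟩
  rw [Fin.strictMono_iff_lt_succ]
  intro i
  have h1 : P ((i.castSucc : ℕ)) < P ((i.succ : ℕ)) := by
    rw [Fin.coe_castSucc, Fin.val_succ]
    exact lt_of_le_of_ne (hmono i) (hne i i.isLt)
  exact (PrimeSpectrum.asIdeal_lt_asIdeal _ _).mp h1


end BohlProof

/-- The Krull dimension of the Bohl algebra is infinite. -/
theorem krullDim_Bohl_infinite : ringKrullDim Bohl = ⊤ := by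
  haveI : InfiniteDimensionalOrder (PrimeSpectrum Bohl) :=
    ⟨fun n => BohlProof.exists_ltSeries n⟩
  exact Order.krullDim_eq_top
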